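/- The bivariate degenerate Hermite polynomials satisfy the differential equation (x·∂_x + (2λ/log(1+λ))·y·∂_x² − n) H_n(x,y|λ) = 0 for all n ≥ 0. -/

import Mathlib

open Real Finset MeasureTheory

noncomputable def dH (l x y : ℝ) (n : ℕ) : ℝ :=
  ∑ k ∈ Finset.range (n / 2 + 1),
    (Nat.factorial n : ℝ) / ((Nat.factorial (n - 2 * k) : ℝ) * (Nat.factorial k : ℝ)) *
      (Real.log (1 + l) / l) ^ (n - k) * x ^ (n - 2 * k) * y ^ k

noncomputable def dC (l y : ℝ) (n k : ℕ) : ℝ :=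
  (Nat.factorial n : ℝ) / ((Nat.factorial (n - 2 * k) : ℝ) * (Nat.factorial k : ℝ)) *
    (Real.log (1 + l) / l) ^ (n - k) * y ^ k

lemma dH_eq (l x y : ℝ) (n : ℕ) :
    dH l x y n = ∑ k ∈ Finset.range (n / 2 + 1), dC l y n k * x ^ (n - 2 * k) := by
  unfold dH dC
  exact Finset.sum_congr rfl fun k _ => by ring

lemma dH_hasDerivAt (l y : ℝ) (n : ℕ) (x : ℝ) :
    HasDerivAt (fun x' => dH l x' y n)
      (∑ k ∈ Finset.range (n / 2 + 1),
        dC l y n k * (((n - 2 * k : ℕ) : ℝ) * x ^ (n - 2 * k - 1))) x := by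
  have h : (fun x' => dH l x' y n)
      = fun x' => ∑ k ∈ Finset.range (n / 2 + 1), dC l y n k * x' ^ (n - 2 * k) :=
    funext fun x' => dH_eq l x' y n
  rw [h]
  exact HasDerivAt.fun_sum fun k _ => (hasDerivAt_pow _ x).const_mul _

lemma deriv_dH (l y : ℝ) (n : ℕ) :
    deriv (fun x' => dH l x' y n)
      = fun x => ∑ k ∈ Finset.range (n / 2 + 1),
          dC l y n k * (((n - 2 * k : ℕ) : ℝ) * x ^ (n - 2 * k - 1)) :=
  funext fun x => (dH_hasDerivAt l y n x).deriv

lemma deriv2_dH (l y : ℝ) (n : ℕ) (x : ℝ) :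
    iteratedDeriv 2 (fun x' => dH l x' y n) x
      = ∑ k ∈ Finset.range (n / 2 + 1),
          dC l y n k * (((n - 2 * k : ℕ) : ℝ) *
            (((n - 2 * k - 1 : ℕ) : ℝ) * x ^ (n - 2 * k - 2))) := by
  rw [iteratedDeriv_succ, iteratedDeriv_one, deriv_dH]
  have h : HasDerivAt (fun x : ℝ => ∑ k ∈ Finset.range (n / 2 + 1),
      dC l y n k * (((n - 2 * k : ℕ) : ℝ) * x ^ (n - 2 * k - 1)))
      (∑ k ∈ Finset.range (n / 2 + 1),
        dC l y n k * (((n - 2 * k : ℕ) : ℝ) *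
          (((n - 2 * k - 1 : ℕ) : ℝ) * x ^ (n - 2 * k - 1 - 1)))) x :=
    HasDerivAt.fun_sum fun k _ => ((hasDerivAt_pow _ x).const_mul _).const_mul _
  rw [h.deriv]
  exact Finset.sum_congr rfl fun k _ => by
    rw [show n - 2 * k - 1 - 1 = n - 2 * k - 2 from by omega]

theorem stmt15 (l : ℝ) (hl : 0 < l) (n : ℕ) (x y : ℝ) :
    x * deriv (fun x' => dH l x' y n) x +
        (2 * l / Real.log (1 + l)) * y * iteratedDeriv 2 (fun x' => dH l x' y n) x -
      (n : ℝ) * dH l x y n = 0 := by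
  have hlog : Real.log (1 + l) ≠ 0 := ne_of_gt (Real.log_pos (by linarith))
  have hl0 : l ≠ 0 := ne_of_gt hl
  rw [deriv_dH, deriv2_dH, dH_eq]
  rw [Finset.mul_sum, Finset.mul_sum, Finset.mul_sum, ← Finset.sum_add_distrib,
    ← Finset.sum_sub_distrib]
  set K := n / 2 with hK
  set g : ℕ → ℝ := fun k => 2 * k * dC l y n k * x ^ (n - 2 * k) with hg
  have h1 : ∀ k ∈ Finset.range (K + 1),
      x * (dC l y n k * (((n - 2 * k : ℕ) : ℝ) * x ^ (n - 2 * k - 1)))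
        + (2 * l / Real.log (1 + l)) * y *
            (dC l y n k * (((n - 2 * k : ℕ) : ℝ) *
              (((n - 2 * k - 1 : ℕ) : ℝ) * x ^ (n - 2 * k - 2))))
        - (n : ℝ) * (dC l y n k * x ^ (n - 2 * k))
      = (2 * l / Real.log (1 + l)) * y *
            (dC l y n k * (((n - 2 * k : ℕ) : ℝ) *
              (((n - 2 * k - 1 : ℕ) : ℝ) * x ^ (n - 2 * k - 2)))) - g k := by
    intro k hk
    rw [Finset.mem_range] at hk
    have h2k : 2 * k ≤ n := by omega
    have key : x * (dC l y n k * (((n - 2 * k : ℕ) : ℝ) * x ^ (n - 2 * k - 1)))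
        - (n : ℝ) * (dC l y n k * x ^ (n - 2 * k)) = -g k := by
      rcases Nat.eq_zero_or_eq_succ_pred (n - 2 * k) with h0 | hs
      · have hn : (n : ℝ) = 2 * k := by
          have : n = 2 * k := by omega
          rw [this]; push_cast; ring
        simp only [hg, h0, hn, Nat.cast_zero, pow_zero, zero_mul, mul_zero, mul_one]
        ring
      · set j := (n - 2 * k).pred with hj
        have hm : n - 2 * k = j + 1 := hs
        have hm1 : n - 2 * k - 1 = j := by omega
        have hcast : ((n - 2 * k : ℕ) : ℝ) = (n : ℝ) - 2 * k := by
          push_cast [Nat.cast_sub h2k]; ring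
        simp only [hg]
        rw [hcast, hm1, hm, pow_succ]
        ring
    linarith [key]
  rw [Finset.sum_congr rfl h1, Finset.sum_sub_distrib]
  have h3 : (2 * l / Real.log (1 + l)) * y *
      (dC l y n K * (((n - 2 * K : ℕ) : ℝ) *
        (((n - 2 * K - 1 : ℕ) : ℝ) * x ^ (n - 2 * K - 2)))) = 0 := by
    have : n - 2 * K = 0 ∨ n - 2 * K = 1 := by omega
    rcases this with h | h <;> simp [h]
  have h2 : ∀ k ∈ Finset.range K,
      (2 * l / Real.log (1 + l)) * y *
        (dC l y n k * (((n - 2 * k : ℕ) : ℝ) *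
          (((n - 2 * k - 1 : ℕ) : ℝ) * x ^ (n - 2 * k - 2))))
      = g (k + 1) := by
    intro k hk
    rw [Finset.mem_range] at hk
    have h2k : 2 * (k + 1) ≤ n := by omega
    simp only [hg, dC]
    rw [show n - 2 * k - 2 = n - 2 * (k + 1) from by omega,
        show n - 2 * k - 1 = n - 2 * (k + 1) + 1 from by omega,
        show n - 2 * k = n - 2 * (k + 1) + 2 from by omega,
        show n - k = n - (k + 1) + 1 from by omega]
    set j := n - 2 * (k + 1) with hj
    set i := n - (k + 1) with hi
    have f1 : (Nat.factorial (j + 2) : ℝ) = (j + 2) * (j + 1) * Nat.factorial j := by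
      rw [Nat.factorial_succ, Nat.factorial_succ]; push_cast; ring
    have f2 : (Nat.factorial (k + 1) : ℝ) = (k + 1) * Nat.factorial k := by
      rw [Nat.factorial_succ]; push_cast; ring
    rw [f1, f2, pow_succ]
    have hfj : (Nat.factorial j : ℝ) ≠ 0 := Nat.cast_ne_zero.mpr (Nat.factorial_ne_zero j)
    have hfk : (Nat.factorial k : ℝ) ≠ 0 := Nat.cast_ne_zero.mpr (Nat.factorial_ne_zero k)
    field_simp
    push_cast
    ring
  rw [Finset.sum_range_succ, h3, add_zero, Finset.sum_congr rfl h2,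
    Finset.sum_range_succ' g K]
  have hg0 : g 0 = 0 := by simp [hg]
  rw [hg0, add_zero, sub_self]
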